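/- Let H be a real Hilbert space, D a nonempty closed convex subset, and T_1,...,T_m nonexpansive operators from D to D. If for some j the operator T_j has bounded range, then for every ε ∈ (0,1], the under-relaxed composition R^ε = (Id + ε(T_m − Id)) ∘ ... ∘ (Id + ε(T_1 − Id)) has a fixed point, and the fixed points of R^ε are uniformly bounded in norm independently of ε. -/

import Mathlib

open Filter Topology Metric

/-- `relaxComp m T ε = (Id + ε(T m − Id)) ∘ ⋯ ∘ (Id + ε(T 1 − Id))`:
the under-relaxed cyclic composition, applying `T 1` first and `T m` last. -/
noncomputable def relaxComp {H : Type*} [NormedAddCommGroup H] [Module ℝ H]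
    (m : ℕ) (T : ℕ → H → H) (ε : ℝ) (x : H) : H :=
  (List.range m).foldl (fun y i => y + ε • (T (i + 1) y - y)) x

set_option maxHeartbeats 1000000

lemma ultraLim (U : Ultrafilter ℕ) (a : ℕ → ℝ) (M : ℝ) (h : ∀ n, |a n| ≤ M) :
    ∃ l, Tendsto a (U : Filter ℕ) (𝓝 l) := by
  have hmem : (U.map a : Filter ℝ) ≤ 𝓟 (Set.Icc (-M) M) := by
    rw [Filter.le_principal_iff]
    have : ∀ n, a n ∈ Set.Icc (-M) M := fun n => abs_le.mp (h n)
    exact Filter.mem_map.mpr (Filter.univ_mem' this)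
  obtain ⟨l, _, hl⟩ := isCompact_Icc.ultrafilter_le_nhds (U.map a) hmem
  exact ⟨l, hl⟩

lemma browder {H : Type*} [NormedAddCommGroup H] [InnerProductSpace ℝ H] [CompleteSpace H]
    (C : Set H) (hne : C.Nonempty) (hc : IsClosed C) (hconv : Convex ℝ C)
    (M : ℝ) (hbd : ∀ x ∈ C, ‖x‖ ≤ M)
    (f : H → H) (hmaps : Set.MapsTo f C C)
    (hf : ∀ x ∈ C, ∀ y ∈ C, ‖f x - f y‖ ≤ ‖x - y‖) :
    ∃ z ∈ C, f z = z := by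
  obtain ⟨p, hp⟩ := hne
  have hM0 : 0 ≤ M := le_trans (norm_nonneg p) (hbd p hp)
  -- approximate fixed points
  have approx : ∀ n : ℕ, ∃ x ∈ C, ‖x - f x‖ ≤ (1 / (n + 2 : ℝ)) * (2 * M) := by
    intro n
    set t : ℝ := (n + 1 : ℝ) / (n + 2) with ht_def
    have hn2 : (0:ℝ) < (n:ℝ) + 2 := by positivity
    have ht0 : 0 ≤ t := by positivity
    have ht1 : t < 1 := by
      rw [div_lt_one hn2]; linarith
    have hmem : ∀ x : C, (1 - t) • p + t • f x ∈ C := fun x =>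
      hconv hp (hmaps x.2) (by linarith) ht0 (by ring)
    haveI : CompleteSpace C := hc.completeSpace_coe
    haveI : Nonempty C := ⟨⟨p, hp⟩⟩
    set g : C → C := fun x => ⟨(1 - t) • p + t • f x, hmem x⟩ with hg
    have hK : ContractingWith ⟨t, ht0⟩ g := by
      constructor
      · exact_mod_cast ht1
      · apply LipschitzWith.of_dist_le_mul
        intro x y
        simp only [hg, Subtype.dist_eq, dist_eq_norm]
        have : ((1 - t) • p + t • f x) - ((1 - t) • p + t • f y) = t • (f x - f y) := by
          rw [smul_sub]; abel
        rw [this, norm_smul]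
        simp only [Real.norm_eq_abs, abs_of_nonneg ht0, NNReal.coe_mk]
        exact mul_le_mul_of_nonneg_left (hf _ x.2 _ y.2) ht0
    obtain ⟨y, hy, -⟩ := hK.exists_fixedPoint ⟨p, hp⟩ (edist_ne_top _ _)
    refine ⟨y.1, y.2, ?_⟩
    have hyfix : (1 - t) • p + t • f y.1 = y.1 := congrArg Subtype.val hy
    have : y.1 - f y.1 = (1 - t) • (p - f y.1) := by
      nth_rewrite 1 [← hyfix]
      module
    rw [this, norm_smul, Real.norm_eq_abs]
    have h1t : (1:ℝ) - t = 1 / (n + 2) := by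
      rw [ht_def, one_sub_div hn2.ne']; congr 1; ring
    rw [abs_of_nonneg (by linarith), h1t]
    have : ‖p - f y.1‖ ≤ 2 * M := by
      calc ‖p - f y.1‖ ≤ ‖p‖ + ‖f y.1‖ := norm_sub_le _ _
        _ ≤ M + M := add_le_add (hbd p hp) (hbd _ (hmaps y.2))
        _ = 2 * M := by ring
    exact mul_le_mul_of_nonneg_left this (by positivity)
  choose x hxC hxapprox using approx
  set δ : ℕ → ℝ := fun n => ‖x n - f (x n)‖ with hδdef
  have hδ0 : Tendsto δ atTop (𝓝 0) := by
    have hb2 : ∀ n : ℕ, δ n ≤ (1 / ((n:ℝ) + 1)) * (2 * M) := ?_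
    · apply squeeze_zero (fun n => norm_nonneg _) hb2
      have h1 : Tendsto (fun n : ℕ => (1 / ((n:ℝ) + 1)) * (2 * M)) atTop (𝓝 (0 * (2*M))) :=
        Tendsto.mul_const _ tendsto_one_div_add_atTop_nhds_zero_nat
      simpa using h1
    have hle : ∀ n : ℕ, (1 / ((n:ℝ) + 2)) * (2 * M) ≤ (1 / ((n:ℝ) + 1)) * (2 * M) := by
      intro n
      apply mul_le_mul_of_nonneg_right _ (by positivity)
      apply one_div_le_one_div_of_le (by positivity)
      linarith
    intro n
    exact le_trans (hxapprox n) (hle n)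
  obtain ⟨U, hU⟩ := (Filter.atTop : Filter ℕ).exists_ultrafilter_le
  -- the linear functional
  have hxb : ∀ n, ‖x n‖ ≤ M := fun n => hbd _ (hxC n)
  have hinner_bd : ∀ y : H, ∀ n, |(inner ℝ (x n) y : ℝ)| ≤ M * ‖y‖ := by
    intro y n
    calc |(inner ℝ (x n) y : ℝ)| ≤ ‖x n‖ * ‖y‖ := abs_real_inner_le_norm _ _
      _ ≤ M * ‖y‖ := mul_le_mul_of_nonneg_right (hxb n) (norm_nonneg y)
  have hℓ := fun y : H => ultraLim U (fun n => (inner ℝ (x n) y : ℝ)) (M * ‖y‖) (hinner_bd y)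
  choose ℓ hℓ using hℓ
  have ℓadd : ∀ y z : H, ℓ (y + z) = ℓ y + ℓ z := by
    intro y z
    refine tendsto_nhds_unique (hℓ (y+z)) ?_
    have : (fun n => (inner ℝ (x n) (y + z) : ℝ)) = fun n => (inner ℝ (x n) y : ℝ) + inner ℝ (x n) z := by
      funext n; exact inner_add_right _ _ _
    rw [this]
    exact (hℓ y).add (hℓ z)
  have ℓsmul : ∀ (c : ℝ) (y : H), ℓ (c • y) = c * ℓ y := by
    intro c y
    refine tendsto_nhds_unique (hℓ (c • y)) ?_
    have : (fun n => (inner ℝ (x n) (c • y) : ℝ)) = fun n => c * (inner ℝ (x n) y : ℝ) := by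
      funext n; exact real_inner_smul_right _ _ _
    rw [this]
    exact (hℓ y).const_mul c
  set L : H →L[ℝ] ℝ := LinearMap.mkContinuous
    { toFun := ℓ, map_add' := ℓadd, map_smul' := ℓsmul } M
    (by
      intro y
      simp only [LinearMap.coe_mk, AddHom.coe_mk]
      rw [Real.norm_eq_abs]
      refine le_of_tendsto' (hℓ y).abs fun n => hinner_bd y n) with hL
  set w : H := (InnerProductSpace.toDual ℝ H).symm L with hw
  have hwy : ∀ y : H, (inner ℝ w y : ℝ) = ℓ y := fun y => InnerProductSpace.toDual_symm_apply
  obtain ⟨c₀, hc₀⟩ := ultraLim U (fun n => ‖x n‖ ^ 2) (M ^ 2)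
    (fun n => by
      rw [abs_of_nonneg (by positivity)]
      exact pow_le_pow_left₀ (norm_nonneg _) (hxb n) 2)
  set Φ : H → ℝ := fun y => ‖y‖ ^ 2 - 2 * ℓ y + c₀ with hΦ
  have hΦtendsto : ∀ y : H, Tendsto (fun n => ‖y - x n‖ ^ 2) (U : Filter ℕ) (𝓝 (Φ y)) := by
    intro y
    have heq : (fun n => ‖y - x n‖ ^ 2) =
        fun n => ‖y‖ ^ 2 - 2 * (inner ℝ (x n) y : ℝ) + ‖x n‖ ^ 2 := by
      funext n
      rw [norm_sub_sq_real, real_inner_comm]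
    rw [heq]
    exact Tendsto.add (Tendsto.sub tendsto_const_nhds ((hℓ y).const_mul 2)) hc₀
  have hΦdiff : ∀ y : H, Φ y = ‖y - w‖ ^ 2 + (c₀ - ‖w‖ ^ 2) := by
    intro y
    have := norm_sub_sq_real y w
    have h2 : (inner ℝ y w : ℝ) = ℓ y := by rw [real_inner_comm]; exact hwy y
    rw [hΦ]; simp only []
    rw [this, h2]; ring
  -- minimizer
  obtain ⟨z, hzC, hzmin⟩ := exists_norm_eq_iInf_of_complete_convex ⟨p, hp⟩
    (hc.isComplete) hconv w
  have hmin : ∀ y ∈ C, ‖w - z‖ ≤ ‖w - y‖ := by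
    intro y hy
    rw [hzmin]
    exact ciInf_le ⟨0, by rintro r ⟨q, rfl⟩; exact norm_nonneg _⟩ (⟨y, hy⟩ : C)
  -- f z is also a minimizer
  obtain ⟨s, hs⟩ := ultraLim U (fun n => ‖z - x n‖) (‖z‖ + M)
    (fun n => by
      rw [abs_of_nonneg (norm_nonneg _)]
      calc ‖z - x n‖ ≤ ‖z‖ + ‖x n‖ := norm_sub_le _ _
        _ ≤ ‖z‖ + M := by linarith [hxb n])
  have hs2 : Φ z = s ^ 2 := by
    refine tendsto_nhds_unique (hΦtendsto z) ?_
    have : (fun n => ‖z - x n‖ ^ 2) = fun n => ‖z - x n‖ * ‖z - x n‖ := by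
      funext n; ring
    rw [this, show s ^ 2 = s * s by ring]
    exact hs.mul hs
  have hδU : Tendsto δ (U : Filter ℕ) (𝓝 0) := hδ0.mono_left hU
  have hfzΦ : Φ (f z) ≤ Φ z := by
    have hineq : ∀ n, ‖f z - x n‖ ^ 2 ≤ (‖z - x n‖ + δ n) ^ 2 := by
      intro n
      have h1 : ‖f z - x n‖ ≤ ‖z - x n‖ + δ n := by
        calc ‖f z - x n‖ ≤ ‖f z - f (x n)‖ + ‖f (x n) - x n‖ := norm_sub_le_norm_sub_add_norm_sub _ _ _
          _ ≤ ‖z - x n‖ + δ n := by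
              refine add_le_add (hf _ hzC _ (hxC n)) ?_
              rw [hδdef]; simp only []
              rw [norm_sub_rev]
      exact pow_le_pow_left₀ (norm_nonneg _) h1 2
    have hrhs : Tendsto (fun n => (‖z - x n‖ + δ n) ^ 2) (U : Filter ℕ) (𝓝 (s ^ 2)) := by
      have := (hs.add hδU).pow 2
      simpa using this
    rw [hs2]
    exact le_of_tendsto_of_tendsto' (hΦtendsto (f z)) hrhs hineq
  have hfzC : f z ∈ C := hmaps hzC
  -- conclude f z = z
  have hle1 : ‖f z - w‖ ^ 2 ≤ ‖z - w‖ ^ 2 := by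
    have := hfzΦ
    rw [hΦdiff (f z), hΦdiff z] at this
    linarith
  have hge1 : ‖z - w‖ ≤ ‖f z - w‖ := by
    rw [norm_sub_rev z w, norm_sub_rev (f z) w]
    exact hmin _ hfzC
  have heqn : ‖f z - w‖ = ‖z - w‖ := by
    refine le_antisymm ?_ hge1
    nlinarith [norm_nonneg (f z - w), norm_nonneg (z - w)]
  have hu : (1/2 : ℝ) • z + (1/2 : ℝ) • f z ∈ C :=
    hconv hzC hfzC (by norm_num) (by norm_num) (by norm_num)
  have humin : ‖w - z‖ ≤ ‖w - ((1/2 : ℝ) • z + (1/2 : ℝ) • f z)‖ := hmin _ hu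
  have hpar := parallelogram_law_with_norm ℝ (z - w) (f z - w)
  have hsum : ‖(z - w) + (f z - w)‖ = 2 * ‖(1/2 : ℝ) • z + (1/2 : ℝ) • f z - w‖ := by
    have : (z - w) + (f z - w) = (2:ℝ) • ((1/2 : ℝ) • z + (1/2 : ℝ) • f z - w) := by
      rw [smul_sub, smul_add, smul_smul, smul_smul]
      norm_num
      rw [show ((2:ℝ)) • w = w + w by rw [two_smul]]
      abel
    rw [this, norm_smul]
    norm_num
  have hd : ‖z - w‖ ≤ ‖(1/2 : ℝ) • z + (1/2 : ℝ) • f z - w‖ := by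
    rw [show ‖z - w‖ = ‖w - z‖ from norm_sub_rev _ _,
        show ‖(1/2 : ℝ) • z + (1/2 : ℝ) • f z - w‖ = ‖w - ((1/2 : ℝ) • z + (1/2 : ℝ) • f z)‖ from
      norm_sub_rev _ _]
    exact humin
  have hzero : ‖(z - w) - (f z - w)‖ * ‖(z - w) - (f z - w)‖ ≤ 0 := by
    rw [heqn] at hpar
    nlinarith [hpar, hsum, hd, norm_nonneg (z - w), norm_nonneg ((1/2 : ℝ) • z + (1/2 : ℝ) • f z - w)]
  have : z - f z = 0 := by
    have h0 : ‖(z - w) - (f z - w)‖ = 0 :=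
      le_antisymm (by nlinarith [norm_nonneg ((z - w) - (f z - w))]) (norm_nonneg _)
    have : (z - w) - (f z - w) = z - f z := by abel
    rw [this] at h0
    exact norm_eq_zero.mp h0
  exact ⟨z, hzC, (sub_eq_zero.mp this).symm⟩

theorem stmt0 {H : Type*} [NormedAddCommGroup H] [InnerProductSpace ℝ H] [CompleteSpace H]
    (D : Set H) (hD : D.Nonempty) (hDc : IsClosed D) (hDconv : Convex ℝ D)
    (m : ℕ) (hm : 2 ≤ m) (T : ℕ → H → H)
    (hmap : ∀ i ∈ Finset.Icc 1 m, Set.MapsTo (T i) D D)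
    (hne : ∀ i ∈ Finset.Icc 1 m, ∀ x ∈ D, ∀ y ∈ D, ‖T i x - T i y‖ ≤ ‖x - y‖)
    (j : ℕ) (hj : j ∈ Finset.Icc 1 m)
    (hbdd : ∃ y ρ, T j '' D ⊆ Metric.closedBall y ρ) :
    ∃ β : ℝ, ∀ ε ∈ Set.Ioc (0:ℝ) 1,
      (∃ z ∈ D, relaxComp m T ε z = z) ∧
      (∀ z ∈ D, relaxComp m T ε z = z → ‖z‖ ≤ β) := by
  obtain ⟨p, hpD⟩ := hD
  obtain ⟨c, ρ, hball⟩ := hbdd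
  obtain ⟨hj1, hjm⟩ := Finset.mem_Icc.mp hj
  set Mi : ℕ → ℝ := fun i => ‖T i p - p‖ with hMi
  set K : ℝ := ρ + ‖c - p‖ with hKdef
  have hρ0 : 0 ≤ ρ := by
    have := hball ⟨p, hpD, rfl⟩
    exact le_trans dist_nonneg (mem_closedBall.mp this)
  have hK0 : 0 ≤ K := add_nonneg hρ0 (norm_nonneg _)
  set A : ℝ := K + ∑ i ∈ Finset.Icc 1 m, Mi i with hAdef
  have hA0 : 0 ≤ A := add_nonneg hK0 (Finset.sum_nonneg fun i _ => norm_nonneg _)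
  refine ⟨‖p‖ + A, ?_⟩
  rintro ε ⟨hε0, hε1⟩
  set step : H → ℕ → H := fun y i => y + ε • (T (i + 1) y - y) with hstep
  set P : ℕ → H → H := fun k u => (List.range k).foldl step u with hP
  have hPsucc : ∀ k u, P (k+1) u = step (P k u) k := by
    intro k u
    simp [hP, List.range_succ]
  have hstep_mem : ∀ i ∈ Finset.Icc 1 m, ∀ v ∈ D, v + ε • (T i v - v) ∈ D := by
    intro i hi v hv
    have h1 : v + ε • (T i v - v) = (1 - ε) • v + ε • T i v := by module
    rw [h1]
    exact hDconv hv (hmap i hi hv) (by linarith) (le_of_lt hε0) (by ring)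
  have hmemP : ∀ k, k ≤ m → ∀ u ∈ D, P k u ∈ D := by
    intro k
    induction k with
    | zero => intro _ u hu; simpa [hP] using hu
    | succ k ih =>
      intro hk u hu
      rw [hPsucc]
      exact hstep_mem (k+1) (Finset.mem_Icc.mpr ⟨Nat.le_add_left 1 k, hk⟩) _
        (ih (Nat.le_of_succ_le hk) u hu)
  have hlipP : ∀ k, k ≤ m → ∀ u ∈ D, ∀ v ∈ D, ‖P k u - P k v‖ ≤ ‖u - v‖ := by
    intro k
    induction k with
    | zero => intro _ u _ v _; simp [hP]
    | succ k ih =>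
      intro hk u hu v hv
      have hk' := Nat.le_of_succ_le hk
      have ha := hmemP k hk' u hu
      have hb := hmemP k hk' v hv
      have hi : (k+1) ∈ Finset.Icc 1 m := Finset.mem_Icc.mpr ⟨Nat.le_add_left 1 k, hk⟩
      rw [hPsucc, hPsucc]
      have heq : step (P k u) k - step (P k v) k
          = (1 - ε) • (P k u - P k v) + ε • (T (k+1) (P k u) - T (k+1) (P k v)) := by
        simp only [hstep]; module
      calc ‖step (P k u) k - step (P k v) k‖
          ≤ (1-ε) * ‖P k u - P k v‖ + ε * ‖T (k+1) (P k u) - T (k+1) (P k v)‖ := by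
            rw [heq]
            refine le_trans (norm_add_le _ _) ?_
            rw [norm_smul, norm_smul, Real.norm_eq_abs, Real.norm_eq_abs,
              abs_of_nonneg (by linarith : (0:ℝ) ≤ 1 - ε), abs_of_nonneg (le_of_lt hε0)]
        _ ≤ (1-ε) * ‖P k u - P k v‖ + ε * ‖P k u - P k v‖ := by
            have h := hne (k+1) hi _ ha _ hb
            nlinarith [h, hε0.le]
        _ = ‖P k u - P k v‖ := by ring
        _ ≤ ‖u - v‖ := ih hk' u hu v hv
  set S : ℕ → ℝ := fun k => ∑ i ∈ Finset.Icc 1 k, (if i = j then 0 else Mi i) with hS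
  have hS0 : ∀ k, 0 ≤ S k := by
    intro k
    apply Finset.sum_nonneg
    intro i _
    split_ifs
    · exact le_rfl
    · exact norm_nonneg _
  have hSsucc : ∀ k, S (k+1) = S k + (if k+1 = j then 0 else Mi (k+1)) := by
    intro k
    exact Finset.sum_Icc_succ_top (by omega) _
  have hgrow : ∀ k, k ≤ m → ∀ u ∈ D,
      ‖P k u - p‖ ≤ if k < j then ‖u - p‖ + ε * S k else (1 - ε) * ‖u - p‖ + ε * (K + S k) := by
    intro k
    induction k with
    | zero =>
      intro _ u hu
      rw [if_pos (by omega : 0 < j)]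
      have : P 0 u = u := by simp [hP]
      rw [this]
      have : S 0 = 0 := by simp [hS]
      rw [this]
      nlinarith [norm_nonneg (u - p), hε0.le]
    | succ k ih =>
      intro hk u hu
      have hk' := Nat.le_of_succ_le hk
      have hq : P k u ∈ D := hmemP k hk' u hu
      have hi : (k+1) ∈ Finset.Icc 1 m := Finset.mem_Icc.mpr ⟨Nat.le_add_left 1 k, hk⟩
      have hbase : ‖P (k+1) u - p‖ ≤ (1 - ε) * ‖P k u - p‖ + ε * ‖T (k+1) (P k u) - p‖ := by
        rw [hPsucc]
        have heq : step (P k u) k - p = (1 - ε) • (P k u - p) + ε • (T (k+1) (P k u) - p) := by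
          simp only [hstep]; module
        rw [heq]
        refine le_trans (norm_add_le _ _) ?_
        rw [norm_smul, norm_smul, Real.norm_eq_abs, Real.norm_eq_abs,
          abs_of_nonneg (by linarith : (0:ℝ) ≤ 1 - ε), abs_of_nonneg (le_of_lt hε0)]
      have ihq := ih hk' u hu
      have hMnn : 0 ≤ Mi (k+1) := norm_nonneg _
      have hSk := hS0 k
      have hup : 0 ≤ ‖u - p‖ := norm_nonneg _
      have hqp : 0 ≤ ‖P k u - p‖ := norm_nonneg _
      by_cases hcase : k + 1 = j
      · have hkltj : k < j := by omega
        rw [if_pos hkltj] at ihq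
        have hTb : ‖T (k+1) (P k u) - p‖ ≤ K := by
          rw [hcase]
          calc ‖T j (P k u) - p‖ ≤ ‖T j (P k u) - c‖ + ‖c - p‖ :=
                norm_sub_le_norm_sub_add_norm_sub _ _ _
            _ ≤ ρ + ‖c - p‖ := by
                have hm2 := hball ⟨P k u, hq, rfl⟩
                rw [mem_closedBall, dist_eq_norm] at hm2
                linarith
        rw [if_neg (by omega : ¬ (k + 1 < j)), hSsucc k, if_pos hcase]
        nlinarith [hbase, hTb, mul_le_mul_of_nonneg_left ihq (by linarith : (0:ℝ) ≤ 1-ε),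
          mul_le_mul_of_nonneg_left hTb hε0.le, mul_nonneg (mul_nonneg hε0.le hε0.le) hSk]
      · have hT : ‖T (k+1) (P k u) - p‖ ≤ ‖P k u - p‖ + Mi (k+1) := by
          calc ‖T (k+1) (P k u) - p‖
              ≤ ‖T (k+1) (P k u) - T (k+1) p‖ + ‖T (k+1) p - p‖ :=
                norm_sub_le_norm_sub_add_norm_sub _ _ _
            _ ≤ ‖P k u - p‖ + Mi (k+1) := add_le_add (hne (k+1) hi _ hq p hpD) le_rfl
        by_cases hlt : k + 1 < j
        · rw [if_pos (by omega : k < j)] at ihq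
          rw [if_pos hlt, hSsucc k, if_neg hcase]
          nlinarith [hbase, mul_le_mul_of_nonneg_left hT hε0.le, ihq, hε0.le, hε1]
        · rw [if_neg (by omega : ¬ k < j)] at ihq
          rw [if_neg (by omega : ¬ (k+1 < j)), hSsucc k, if_neg hcase]
          nlinarith [hbase, mul_le_mul_of_nonneg_left hT hε0.le, ihq, hε0.le, hε1]
  have hreq : ∀ u : H, relaxComp m T ε u = P m u := fun u => rfl
  have hRD : ∀ u ∈ D, relaxComp m T ε u ∈ D := by
    intro u hu; rw [hreq]; exact hmemP m le_rfl u hu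
  have hRgrow : ∀ u ∈ D, ‖relaxComp m T ε u - p‖ ≤ (1 - ε) * ‖u - p‖ + ε * A := by
    intro u hu
    have h := hgrow m le_rfl u hu
    rw [if_neg (by omega : ¬ m < j)] at h
    have hSA : S m ≤ ∑ i ∈ Finset.Icc 1 m, Mi i := by
      apply Finset.sum_le_sum
      intro i _
      split_ifs
      · exact norm_nonneg _
      · exact le_rfl
    rw [hreq]
    calc ‖P m u - p‖ ≤ (1-ε) * ‖u-p‖ + ε * (K + S m) := h
      _ ≤ (1-ε)*‖u-p‖ + ε * A := by
          rw [hAdef]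
          nlinarith [hε0.le, hSA]
  constructor
  · -- existence via browder
    set C : Set H := D ∩ Metric.closedBall p A with hC
    have hpC : p ∈ C := ⟨hpD, mem_closedBall_self hA0⟩
    have hCc : IsClosed C := hDc.inter Metric.isClosed_closedBall
    have hCconv : Convex ℝ C := hDconv.inter (convex_closedBall p A)
    have hCbd : ∀ x ∈ C, ‖x‖ ≤ ‖p‖ + A := by
      intro x hx
      have h2 := mem_closedBall.mp hx.2
      rw [dist_eq_norm] at h2
      calc ‖x‖ = ‖(x - p) + p‖ := by rw [sub_add_cancel]
        _ ≤ ‖x - p‖ + ‖p‖ := norm_add_le _ _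
        _ ≤ ‖p‖ + A := by linarith
    have hmapsC : Set.MapsTo (relaxComp m T ε) C C := by
      intro x hx
      refine ⟨hRD x hx.1, ?_⟩
      rw [mem_closedBall, dist_eq_norm]
      have h1 := hRgrow x hx.1
      have h2 := mem_closedBall.mp hx.2
      rw [dist_eq_norm] at h2
      nlinarith [hε0.le, hε1]
    have hfC : ∀ x ∈ C, ∀ y ∈ C, ‖relaxComp m T ε x - relaxComp m T ε y‖ ≤ ‖x - y‖ := by
      intro x hx y hy
      rw [hreq, hreq]
      exact hlipP m le_rfl x hx.1 y hy.1
    obtain ⟨z, hzC, hzfix⟩ := browder C ⟨p, hpC⟩ hCc hCconv (‖p‖ + A) hCbd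
      (relaxComp m T ε) hmapsC hfC
    exact ⟨z, hzC.1, hzfix⟩
  · intro z hz hfix
    have h := hRgrow z hz
    rw [hfix] at h
    have hzp : ‖z - p‖ ≤ A := by nlinarith [h, hε0]
    calc ‖z‖ = ‖(z - p) + p‖ := by rw [sub_add_cancel]
      _ ≤ ‖z - p‖ + ‖p‖ := norm_add_le _ _
      _ ≤ ‖p‖ + A := by linarith
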